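/- Let G be a simple connected chordal graph in which every vertex has degree 2 or 3, with no cut edges and at least one vertex of degree 2. Then G can be reduced to a single edge (K2) by repeatedly suppressing degree-2 vertices and deleting copies of parallel edges. -/

import Mathlib

/-- A finite multigraph (loops and parallel edges allowed) on vertex type `V`. -/
structure MGraph (V : Type) [DecidableEq V] where
  verts : Finset V
  edges : Multiset (Sym2 V)

namespace MGraph

variable {V : Type} [DecidableEq V]

/-- All endpoints of edges are vertices. -/
def Good (G : MGraph V) : Prop := ∀ e ∈ G.edges, ∀ v ∈ e, v ∈ G.verts

/-- Degree of a vertex: loops count twice. -/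
def degree (G : MGraph V) (v : V) : ℕ :=
  (G.edges.map fun e => if e = s(v, v) then 2 else if v ∈ e then 1 else 0).sum

def Adj (G : MGraph V) (u v : V) : Prop := s(u, v) ∈ G.edges

def ConnectedM (G : MGraph V) : Prop :=
  G.verts.Nonempty ∧ ∀ u ∈ G.verts, ∀ v ∈ G.verts, Relation.ReflTransGen G.Adj u v

/-- The restriction operations of Algorithm 1: delete a leaf, suppress a degree-2
vertex (both only allowed while more than 2 vertices remain), delete one copy of a
parallel (non-loop) edge, delete a loop. -/
inductive Step : MGraph V → MGraph V → Prop
  | deleteLeaf (G : MGraph V) (v : V) (e : Sym2 V) :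
      2 < G.verts.card → v ∈ G.verts → G.degree v = 1 → e ∈ G.edges → v ∈ e →
      Step G ⟨G.verts.erase v, G.edges.erase e⟩
  | suppress (G : MGraph V) (v u w : V) (rest : Multiset (Sym2 V)) :
      2 < G.verts.card → v ∈ G.verts → G.degree v = 2 → u ≠ v → w ≠ v →
      G.edges = s(u, v) ::ₘ s(v, w) ::ₘ rest →
      Step G ⟨G.verts.erase v, s(u, w) ::ₘ rest⟩
  | deleteParallel (G : MGraph V) (e : Sym2 V) :
      ¬ e.IsDiag → 2 ≤ G.edges.count e →
      Step G ⟨G.verts, G.edges.erase e⟩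
  | deleteLoop (G : MGraph V) (v : V) :
      s(v, v) ∈ G.edges →
      Step G ⟨G.verts, G.edges.erase s(v, v)⟩

/-- The same operations but without loop deletion (GSP reduction). -/
inductive StepGSP : MGraph V → MGraph V → Prop
  | deleteLeaf (G : MGraph V) (v : V) (e : Sym2 V) :
      2 < G.verts.card → v ∈ G.verts → G.degree v = 1 → e ∈ G.edges → v ∈ e →
      StepGSP G ⟨G.verts.erase v, G.edges.erase e⟩
  | suppress (G : MGraph V) (v u w : V) (rest : Multiset (Sym2 V)) :
      2 < G.verts.card → v ∈ G.verts → G.degree v = 2 → u ≠ v → w ≠ v →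
      G.edges = s(u, v) ::ₘ s(v, w) ::ₘ rest →
      StepGSP G ⟨G.verts.erase v, s(u, w) ::ₘ rest⟩
  | deleteParallel (G : MGraph V) (e : Sym2 V) :
      ¬ e.IsDiag → 2 ≤ G.edges.count e →
      StepGSP G ⟨G.verts, G.edges.erase e⟩

/-- Only series (suppression) and parallel (parallel-edge deletion) reductions. -/
inductive StepSP : MGraph V → MGraph V → Prop
  | suppress (G : MGraph V) (v u w : V) (rest : Multiset (Sym2 V)) :
      2 < G.verts.card → v ∈ G.verts → G.degree v = 2 → u ≠ v → w ≠ v →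
      G.edges = s(u, v) ::ₘ s(v, w) ::ₘ rest →
      StepSP G ⟨G.verts.erase v, s(u, w) ::ₘ rest⟩
  | deleteParallel (G : MGraph V) (e : Sym2 V) :
      ¬ e.IsDiag → 2 ≤ G.edges.count e →
      StepSP G ⟨G.verts, G.edges.erase e⟩

/-- Being the graph `K2`: two vertices joined by a single edge. -/
def IsK2 (G : MGraph V) : Prop :=
  ∃ u v : V, u ≠ v ∧ G.verts = {u, v} ∧ G.edges = {s(u, v)}

/-- `G` has `K2` as a restricted topological subgraph. -/
def Reduces (G : MGraph V) : Prop :=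
  ∃ H : MGraph V, Relation.ReflTransGen Step G H ∧ IsK2 H

def ReducesGSP (G : MGraph V) : Prop :=
  ∃ H : MGraph V, Relation.ReflTransGen StepGSP G H ∧ IsK2 H

def ReducesSP (G : MGraph V) : Prop :=
  ∃ H : MGraph V, Relation.ReflTransGen StepSP G H ∧ IsK2 H

end MGraph

/-- The multigraph associated to a finite simple graph. -/
noncomputable def SimpleGraph.toMGraph {V : Type} [DecidableEq V] [Fintype V]
    (G : SimpleGraph V) : MGraph V :=
  ⟨Finset.univ, (Set.toFinite G.edgeSet).toFinset.val⟩

/-- A finite simple graph is edgebased if its multigraph reduces to `K2`. -/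
noncomputable def SimpleGraph.Edgebased {V : Type} [DecidableEq V] [Fintype V]
    (G : SimpleGraph V) : Prop :=
  G.toMGraph.Reduces


/-- `G` is chordal: every cycle of length at least four has a chord, i.e. an edge
of `G` joining two vertices of the cycle that is not an edge of the cycle. -/
def SimpleGraph.IsChordal {V : Type*} (G : SimpleGraph V) : Prop :=
  ∀ (v : V) (c : G.Walk v v), c.IsCycle → 4 ≤ c.length →
    ∃ u w : V, u ∈ c.support ∧ w ∈ c.support ∧ G.Adj u w ∧ s(u, w) ∉ c.edges


section AuxLemmas
set_option linter.unusedSectionVars false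
open SimpleGraph Walk

variable {V : Type} [DecidableEq V] {G : SimpleGraph V}

lemma aux_len_zero {u v : V} (p : G.Walk u v) (hl : p.length = 0) : u = v := by
  cases p with
  | nil => rfl
  | cons h p => simp at hl

lemma aux_shortcut : ∀ {x y : V} (q : G.Walk x y) (u w : V), u ∈ q.support → w ∈ q.support →
      G.Adj u w → s(u, w) ∉ q.edges →
      ∃ q' : G.Walk x y, q'.support ⊆ q.support ∧ q'.length < q.length := by
  intro x y q
  induction q with
  | nil =>
    intro u w hu hw huw _
    simp only [Walk.support_nil, List.mem_singleton] at hu hw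
    subst hu; subst hw
    exact absurd huw (G.irrefl)
  | @cons x z y h p ih =>
    intro u w hu hw huw hne
    have key : ∀ u w : V, G.Adj u w → s(u, w) ∉ (Walk.cons h p).edges → u = x →
        w ∈ p.support →
        ∃ q' : G.Walk x y, q'.support ⊆ (Walk.cons h p).support ∧
          q'.length < (Walk.cons h p).length := by
      clear hu hw huw hne u w
      intro u w huw hne hux hw
      subst hux
      by_cases hwz : z = w
      · subst hwz
        exact absurd (by simp [Walk.edges_cons]) hne
      · refine ⟨Walk.cons huw (p.dropUntil w hw), ?_, ?_⟩
        · intro t ht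
          rw [Walk.support_cons] at ht ⊢
          rcases List.mem_cons.mp ht with h1 | h1
          · exact List.mem_cons.mpr (Or.inl h1)
          · exact List.mem_cons.mpr (Or.inr (p.support_dropUntil_subset hw h1))
        · have h1 : (p.takeUntil w hw).length + (p.dropUntil w hw).length = p.length := by
            have := congr_arg Walk.length (p.take_spec hw)
            rwa [Walk.length_append] at this
          have h2 : 1 ≤ (p.takeUntil w hw).length := by
            rcases Nat.eq_zero_or_pos (p.takeUntil w hw).length with h0 | h0
            · exact absurd (aux_len_zero _ h0) hwz
            · exact h0
          simp only [Walk.length_cons]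
          omega
    rw [Walk.support_cons, List.mem_cons] at hu hw
    rcases hu with hu | hu
    · rcases hw with hw | hw
      · exact absurd huw (by rw [hu, hw]; exact G.irrefl)
      · exact key u w huw hne hu hw
    · rcases hw with hw | hw
      · exact key w u huw.symm (by rwa [Sym2.eq_swap]) hw hu
      · have hne' : s(u, w) ∉ p.edges := fun hmem =>
          hne (by rw [Walk.edges_cons]; exact List.mem_cons.mpr (Or.inr hmem))
        obtain ⟨p', hsub, hlt⟩ := ih u w hu hw huw hne'
        refine ⟨Walk.cons h p', ?_, ?_⟩
        · intro t ht
          rw [Walk.support_cons] at ht ⊢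
          rcases List.mem_cons.mp ht with h1 | h1
          · exact List.mem_cons.mpr (Or.inl h1)
          · exact List.mem_cons.mpr (Or.inr (hsub h1))
        · simp only [Walk.length_cons]; omega

lemma aux_closed_walk {S : Set V} (hS : ∀ x ∈ S, ∀ y, G.Adj x y → y ∈ S) :
    ∀ {u w : V}, G.Walk u w → u ∈ S → w ∈ S
  | _, _, Walk.nil, hu => hu
  | _, _, Walk.cons h p, hu => aux_closed_walk hS p (hS _ hu _ h)

lemma aux_closed_reach {S : Set V} (hS : ∀ x ∈ S, ∀ y, G.Adj x y → y ∈ S)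
    {u w : V} (h : G.Reachable u w) (hu : u ∈ S) : w ∈ S := by
  obtain ⟨p⟩ := h
  exact aux_closed_walk hS p hu

lemma aux_chordal_adj (hch : G.IsChordal) (a : V) :
    ∀ (n : ℕ) {x y : V} (P : G.Walk x y), P.length ≤ n → x ≠ y →
      G.Adj a x → G.Adj a y → a ∉ P.support →
      (∀ w ∈ P.support, G.Adj a w → w = x ∨ w = y) → G.Adj x y := by
  intro n
  induction n with
  | zero =>
    intro x y P hlen hxy _ _ _ _
    exact absurd (aux_len_zero P (Nat.le_zero.mp hlen)) hxy
  | succ n ih =>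
    intro x y P hlen hxy hax hay haP hnb
    set P' := P.bypass with hP'def
    have hsub : P'.support ⊆ P.support := P.support_bypass_subset
    have hpath : P'.IsPath := P.bypass_isPath
    have hlen' : P'.length ≤ n + 1 := le_trans P.length_bypass_le hlen
    have haP' : a ∉ P'.support := fun h => haP (hsub h)
    have hnb' : ∀ w ∈ P'.support, G.Adj a w → w = x ∨ w = y :=
      fun w hw => hnb w (hsub hw)
    clear_value P'
    clear hlen haP hnb hP'def
    obtain hl | hl | hl : P'.length = 0 ∨ P'.length = 1 ∨ 2 ≤ P'.length := by omega
    · exact absurd (aux_len_zero P' hl) hxy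
    · exact Walk.adj_of_length_eq_one hl
    · have hya : G.Adj y a := hay.symm
      set c : G.Walk a a := Walk.cons hax (P'.concat hya) with hc
      have hcs : c.support = a :: (P'.support ++ [a]) := by
        rw [hc, Walk.support_cons, Walk.support_concat]
      have hce : c.edges = s(a, x) :: (P'.edges ++ [s(y, a)]) := by
        rw [hc, Walk.edges_cons, Walk.edges_concat, List.concat_eq_append]
      have hax' : s(a, x) ∉ P'.edges := fun h =>
        haP' (P'.fst_mem_support_of_mem_edges h)
      have hya' : s(y, a) ∉ P'.edges := fun h =>
        haP' (P'.snd_mem_support_of_mem_edges h)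
      have hcyc : c.IsCycle := by
        constructor
        · constructor
          · constructor
            rw [hce]
            refine List.nodup_cons.mpr ⟨?_, ?_⟩
            · intro hmem
              rcases List.mem_append.mp hmem with h1 | h1
              · exact hax' h1
              · rw [List.mem_singleton] at h1
                rcases Sym2.eq_iff.mp h1 with ⟨h2, _⟩ | ⟨_, h2⟩
                · exact hay.ne' h2.symm
                · exact hxy h2
            · refine List.Nodup.append hpath.edges_nodup (List.nodup_singleton _) ?_
              intro e he
              rw [List.mem_singleton]
              intro h1; subst h1; exact hya' he
          · rw [hc]; simp
        · rw [hcs]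
          simp only [List.tail_cons]
          refine List.Nodup.append hpath.support_nodup (List.nodup_singleton _) ?_
          intro t ht
          rw [List.mem_singleton]
          intro h1; subst h1; exact haP' ht
      have hclen : 4 ≤ c.length := by
        rw [hc, Walk.length_cons, Walk.length_concat]; omega
      obtain ⟨u, w, hu, hw, huw, hne⟩ := hch a c hcyc hclen
      have hmem : ∀ t : V, t ∈ c.support → t = a ∨ t ∈ P'.support := by
        intro t ht
        rw [hcs] at ht
        rcases List.mem_cons.mp ht with h1 | h1
        · exact Or.inl h1
        · rcases List.mem_append.mp h1 with h2 | h2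
          · exact Or.inr h2
          · exact Or.inl (List.mem_singleton.mp h2)
      have hAside : ∀ s ∈ P'.support, G.Adj a s → s(a, s) ∈ c.edges := by
        intro s hs has
        rcases hnb' s hs has with rfl | rfl
        · rw [hce]; exact List.mem_cons_self
        · rw [hce]
          exact List.mem_cons.mpr (Or.inr (List.mem_append.mpr (Or.inr (by
            rw [Sym2.eq_swap]; exact List.mem_singleton.mpr rfl))))
      have hu' : u ∈ P'.support := by
        rcases hmem u hu with rfl | h1
        · rcases hmem w hw with rfl | h2
          · exact absurd huw G.irrefl
          · exact absurd (hAside w h2 huw) hne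
        · exact h1
      have hw' : w ∈ P'.support := by
        rcases hmem w hw with rfl | h1
        · rw [Sym2.eq_swap] at hne
          exact absurd (hAside u hu' huw.symm) hne
        · exact h1
      have hne' : s(u, w) ∉ P'.edges := by
        intro h1
        exact hne (by rw [hce]; exact List.mem_cons.mpr (Or.inr (List.mem_append.mpr (Or.inl h1))))
      obtain ⟨Q, hQsub, hQlt⟩ := aux_shortcut P' u w hu' hw' huw hne'
      exact ih Q (by omega) hxy hax hay (fun h => haP' (hQsub h))
        (fun w hw => hnb' w (hQsub hw))

lemma aux_bridge_contra (hbridge : ∀ e : Sym2 V, ¬ G.IsBridge e) {b c : V}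
    (hadj : G.Adj b c) (S : Set V) (hb : b ∈ S) (hc : c ∉ S)
    (hS : ∀ x ∈ S, ∀ y, G.Adj x y → s(x, y) = s(b, c) ∨ y ∈ S) : False := by
  have h := hbridge s(b, c)
  rw [SimpleGraph.isBridge_iff] at h
  have hr : (G \ SimpleGraph.fromEdgeSet {s(b, c)}).Reachable b c := by
    by_contra hr; exact h hr
  obtain ⟨W⟩ := hr
  have hS' : ∀ x ∈ S, ∀ y, (G \ SimpleGraph.fromEdgeSet {s(b, c)}).Adj x y → y ∈ S := by
    intro x hx y hxy
    rw [SimpleGraph.sdiff_adj, SimpleGraph.fromEdgeSet_adj] at hxy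
    obtain ⟨hxy, hno⟩ := hxy
    rcases hS x hx y hxy with h1 | h1
    · exact absurd ⟨by simpa using h1, hxy.ne⟩ hno
    · exact h1
  exact hc (aux_closed_walk hS' W hb)

lemma aux_exists_avoid_walk {z x : V} (hzx : G.Adj z x) (hnb : ¬ G.IsBridge s(z, x)) :
    ∃ (m : V) (q : G.Walk m x), G.Adj z m ∧ m ≠ x ∧ z ∉ q.support ∧ q.IsPath := by
  rw [SimpleGraph.isBridge_iff] at hnb
  have hr : (G \ SimpleGraph.fromEdgeSet {s(z, x)}).Reachable z x := by
    by_contra hr; exact hnb hr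
  obtain ⟨W⟩ := hr
  obtain ⟨p, hpath⟩ : ∃ p : (G \ SimpleGraph.fromEdgeSet {s(z, x)}).Walk z x, p.IsPath :=
    ⟨W.bypass, W.bypass_isPath⟩
  cases p with
  | nil => exact absurd hzx G.irrefl
  | @cons _ m _ h0 q0 =>
    rw [Walk.cons_isPath_iff] at hpath
    obtain ⟨hq0, hz0⟩ := hpath
    rw [SimpleGraph.sdiff_adj, SimpleGraph.fromEdgeSet_adj] at h0
    obtain ⟨hGm, hno⟩ := h0
    have hmx : m ≠ x := by
      rintro rfl
      exact hno ⟨by simp, hGm.ne⟩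
    refine ⟨m, q0.transfer G (fun e he =>
      SimpleGraph.edgeSet_mono sdiff_le (q0.edges_subset_edgeSet he)), hGm, hmx, ?_, ?_⟩
    · rw [Walk.support_transfer]; exact hz0
    · rw [Walk.isPath_def, Walk.support_transfer]
      exact hq0.support_nodup

lemma aux_val3 {α : Type} [DecidableEq α] (x y z : α) (h1 : x ≠ y) (h2 : x ≠ z)
    (h3 : y ≠ z) : ({x, y, z} : Finset α).val = ({x, y, z} : Multiset α) := by
  rw [Finset.insert_val_of_notMem (by simp [h1, h2]),
    Finset.insert_val_of_notMem (by simp [h3])]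
  rfl

lemma aux_val5 {α : Type} [DecidableEq α] (x y z w t : α) (h12 : x ≠ y) (h13 : x ≠ z)
    (h14 : x ≠ w) (h15 : x ≠ t) (h23 : y ≠ z) (h24 : y ≠ w) (h25 : y ≠ t)
    (h34 : z ≠ w) (h35 : z ≠ t) (h45 : w ≠ t) :
    ({x, y, z, w, t} : Finset α).val = ({x, y, z, w, t} : Multiset α) := by
  rw [Finset.insert_val_of_notMem (by simp [h12, h13, h14, h15]),
    Finset.insert_val_of_notMem (by simp [h23, h24, h25]),
    Finset.insert_val_of_notMem (by simp [h34, h35]),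
    Finset.insert_val_of_notMem (by simp [h45])]
  rfl

lemma aux_k3 (W : Finset V) (a b c : V) (hab : a ≠ b) (hac : a ≠ c) (hbc : b ≠ c)
    (hW : W = {a, b, c}) :
    ∃ H : MGraph V, Relation.ReflTransGen MGraph.StepSP
      ⟨W, {s(a, b), s(a, c), s(b, c)}⟩ H ∧ MGraph.IsK2 H := by
  have hcard : W.card = 3 := by
    rw [hW, Finset.card_insert_of_notMem (by simp [hab, hac]),
      Finset.card_insert_of_notMem (by simp [hbc]), Finset.card_singleton]
  have hdega : (⟨W, {s(a, b), s(a, c), s(b, c)}⟩ : MGraph V).degree a = 2 := by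
    simp [MGraph.degree, Sym2.eq_iff, Sym2.mem_iff, hab, hac, hbc,
      Ne.symm hab, Ne.symm hac, Ne.symm hbc]
  have hedges : ({s(a, b), s(a, c), s(b, c)} : Multiset (Sym2 V)) =
      s(b, a) ::ₘ s(a, c) ::ₘ {s(b, c)} := by
    rw [show s(b, a) = s(a, b) from Sym2.eq_swap]
    rfl
  have step1 := MGraph.StepSP.suppress ⟨W, {s(a, b), s(a, c), s(b, c)}⟩ a b c {s(b, c)}
    (by rw [hcard]; norm_num) (by rw [hW]; exact Finset.mem_insert_self _ _) hdega
    (Ne.symm hab) (Ne.symm hac) hedges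
  have step2 := MGraph.StepSP.deleteParallel ⟨W.erase a, s(b, c) ::ₘ {s(b, c)}⟩ s(b, c)
    (by simp [Sym2.isDiag_iff_proj_eq, hbc])
    (by simp)
  refine ⟨_, Relation.ReflTransGen.head step1
    (Relation.ReflTransGen.head step2 Relation.ReflTransGen.refl), b, c, hbc, ?_, ?_⟩
  · show W.erase a = {b, c}
    rw [hW]
    ext x
    simp only [Finset.mem_erase, Finset.mem_insert, Finset.mem_singleton]
    constructor
    · rintro ⟨h1, rfl | h2⟩
      · exact absurd rfl h1
      · exact h2
    · rintro (rfl | rfl)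
      · exact ⟨Ne.symm hab, Or.inr (Or.inl rfl)⟩
      · exact ⟨Ne.symm hac, Or.inr (Or.inr rfl)⟩
  · show (s(b, c) ::ₘ {s(b, c)}).erase s(b, c) = {s(b, c)}
    exact Multiset.erase_cons_head _ _

lemma aux_diamond (W : Finset V) (v a b c : V) (hva : v ≠ a) (hvb : v ≠ b) (hvc : v ≠ c)
    (hab : a ≠ b) (hac : a ≠ c) (hbc : b ≠ c) (hW : W = {v, a, b, c}) :
    ∃ H : MGraph V, Relation.ReflTransGen MGraph.StepSP
      ⟨W, {s(a, v), s(v, b), s(a, b), s(a, c), s(b, c)}⟩ H ∧ MGraph.IsK2 H := by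
  have hWe : W.erase v = {a, b, c} := by
    rw [hW]
    ext x
    simp only [Finset.mem_erase, Finset.mem_insert, Finset.mem_singleton]
    constructor
    · rintro ⟨h1, rfl | h2⟩
      · exact absurd rfl h1
      · exact h2
    · rintro (rfl | rfl | rfl)
      · exact ⟨Ne.symm hva, Or.inr (Or.inl rfl)⟩
      · exact ⟨Ne.symm hvb, Or.inr (Or.inr (Or.inl rfl))⟩
      · exact ⟨Ne.symm hvc, Or.inr (Or.inr (Or.inr rfl))⟩
  have hcard : W.card = 4 := by
    rw [hW, Finset.card_insert_of_notMem (by simp [hva, hvb, hvc]),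
      Finset.card_insert_of_notMem (by simp [hab, hac]),
      Finset.card_insert_of_notMem (by simp [hbc]), Finset.card_singleton]
  have hdegv : (⟨W, {s(a, v), s(v, b), s(a, b), s(a, c), s(b, c)}⟩ : MGraph V).degree v = 2 := by
    simp [MGraph.degree, Sym2.eq_iff, Sym2.mem_iff, hva, hvb, hvc, hab, hac, hbc,
      Ne.symm hva, Ne.symm hvb, Ne.symm hvc, Ne.symm hab, Ne.symm hac, Ne.symm hbc]
  have step1 := MGraph.StepSP.suppress ⟨W, {s(a, v), s(v, b), s(a, b), s(a, c), s(b, c)}⟩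
    v a b {s(a, b), s(a, c), s(b, c)}
    (by rw [hcard]; norm_num) (by rw [hW]; exact Finset.mem_insert_self _ _) hdegv
    (Ne.symm hva) (Ne.symm hvb) rfl
  have step2 := MGraph.StepSP.deleteParallel
    ⟨W.erase v, s(a, b) ::ₘ {s(a, b), s(a, c), s(b, c)}⟩ s(a, b)
    (by simp [Sym2.isDiag_iff_proj_eq, hab])
    (by
      have h1 : ({s(a, b), s(a, c), s(b, c)} : Multiset (Sym2 V)).count s(a, b) = 1 := by
        have e1 : s(a, b) ≠ s(a, c) := by simp [Sym2.eq_iff, hbc, hac]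
        have e2 : s(a, b) ≠ s(b, c) := by simp [Sym2.eq_iff, hab, hac]
        simp [Multiset.count_cons, Multiset.count_singleton, e1, e2]
      simp [Multiset.count_cons, h1])
  obtain ⟨H, hsteps, hk2⟩ := aux_k3 (W.erase v) a b c hab hac hbc hWe
  refine ⟨H, ?_, hk2⟩
  have e2 : (⟨W.erase v, (s(a, b) ::ₘ {s(a, b), s(a, c), s(b, c)}).erase s(a, b)⟩ : MGraph V) =
      ⟨W.erase v, {s(a, b), s(a, c), s(b, c)}⟩ := by
    rw [Multiset.erase_cons_head]
  refine Relation.ReflTransGen.head step1 (Relation.ReflTransGen.head step2 ?_)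
  rw [e2]
  exact hsteps

end AuxLemmas

theorem stmt16 {V : Type} [Fintype V] [DecidableEq V] (G : SimpleGraph V)
    (hconn : G.Connected)
    (hchordal : G.IsChordal)
    (hdeg : ∀ v : V, (G.neighborSet v).ncard = 2 ∨ (G.neighborSet v).ncard = 3)
    (hbridge : ∀ e : Sym2 V, ¬ G.IsBridge e)
    (hdeg2 : ∃ v : V, (G.neighborSet v).ncard = 2) :
    G.toMGraph.ReducesSP := by
  classical
  obtain ⟨v, hv2⟩ := hdeg2
  obtain ⟨a, b, hab, hn⟩ := Set.ncard_eq_two.mp hv2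
  have hva : G.Adj v a := by
    have : a ∈ G.neighborSet v := by rw [hn]; exact Set.mem_insert _ _
    exact this
  have hvb : G.Adj v b := by
    have : b ∈ G.neighborSet v := by rw [hn]; exact Set.mem_insert_iff.mpr (Or.inr rfl)
    exact this
  have hnbv : ∀ w, G.Adj v w → w = a ∨ w = b := by
    intro w hw
    have : w ∈ G.neighborSet v := hw
    rw [hn] at this
    simpa using this
  have hva' : v ≠ a := hva.ne
  have hvb' : v ≠ b := hvb.ne
  -- Step 1: a and b are adjacent
  have hab' : G.Adj a b := by
    obtain ⟨m, q, hvm, hma, hzq, hqp⟩ := aux_exists_avoid_walk hva (hbridge s(v, a))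
    have hmb : m = b := by
      rcases hnbv m hvm with h | h
      · exact absurd h hma
      · exact h
    subst hmb
    refine (aux_chordal_adj hchordal v q.length q le_rfl (Ne.symm hab) hvb hva hzq ?_).symm
    intro w hw haw
    rcases hnbv w haw with rfl | rfl
    · exact Or.inr rfl
    · exact Or.inl rfl
  rcases hdeg a with ha2 | ha3
  · -- degree of a is 2
    have hna : G.neighborSet a = {v, b} := by
      refine (Set.eq_of_subset_of_ncard_le ?_ ?_ (Set.toFinite _)).symm
      · intro t ht
        rcases ht with rfl | ht
        · exact hva.symm
        · rw [Set.mem_singleton_iff] at ht; subst ht; exact hab'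
      · rw [ha2, Set.ncard_pair hvb']
    have hnav : ∀ w, G.Adj a w → w = v ∨ w = b := by
      intro w hw
      have : w ∈ G.neighborSet a := hw
      rw [hna] at this
      simpa using this
    rcases hdeg b with hb2 | hb3
    · -- K3 case
      have hnb2 : G.neighborSet b = {v, a} := by
        refine (Set.eq_of_subset_of_ncard_le ?_ ?_ (Set.toFinite _)).symm
        · intro t ht
          rcases ht with rfl | ht
          · exact hvb.symm
          · rw [Set.mem_singleton_iff] at ht; subst ht; exact hab'.symm
        · rw [hb2, Set.ncard_pair hva']
      have hnbw : ∀ w, G.Adj b w → w = v ∨ w = a := by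
        intro w hw
        have : w ∈ G.neighborSet b := hw
        rw [hnb2] at this
        simpa using this
      have hV : ∀ x : V, x = v ∨ x = a ∨ x = b := by
        intro x
        have hcl : ∀ t ∈ ({v, a, b} : Set V), ∀ y, G.Adj t y → y ∈ ({v, a, b} : Set V) := by
          intro t ht y hty
          simp only [Set.mem_insert_iff, Set.mem_singleton_iff] at ht ⊢
          rcases ht with rfl | rfl | rfl
          · rcases hnbv y hty with rfl | rfl <;> tauto
          · rcases hnav y hty with rfl | rfl <;> tauto
          · rcases hnbw y hty with rfl | rfl <;> tauto
        have hx := aux_closed_reach hcl (hconn.preconnected v x) (by simp)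
        simpa using hx
      have hAdj : ∀ x y : V, G.Adj x y ↔
          s(x, y) ∈ ({s(v, a), s(v, b), s(a, b)} : Finset (Sym2 V)) := by
        intro x y
        constructor
        · intro h
          rcases hV x with rfl | rfl | rfl
          · rcases hnbv y h with rfl | rfl <;> simp
          · rcases hnav y h with rfl | rfl <;> simp [Sym2.eq_iff]
          · rcases hnbw y h with rfl | rfl <;> simp [Sym2.eq_iff]
        · intro h
          simp only [Finset.mem_insert, Finset.mem_singleton, Sym2.eq_iff] at h
          rcases h with (⟨rfl, rfl⟩ | ⟨rfl, rfl⟩) | (⟨rfl, rfl⟩ | ⟨rfl, rfl⟩) |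
            (⟨rfl, rfl⟩ | ⟨rfl, rfl⟩)
          exacts [hva, hva.symm, hvb, hvb.symm, hab', hab'.symm]
      have hE : (Set.toFinite G.edgeSet).toFinset =
          ({s(v, a), s(v, b), s(a, b)} : Finset (Sym2 V)) := by
        ext e
        rw [Set.Finite.mem_toFinset]
        induction e using Sym2.ind with
        | _ x y =>
          rw [SimpleGraph.mem_edgeSet]
          exact hAdj x y
      have hne1 : s(v, a) ≠ s(v, b) := by simp [Sym2.eq_iff, hab, hva', hvb', Ne.symm hab, Ne.symm hva', Ne.symm hvb']
      have hne2 : s(v, a) ≠ s(a, b) := by simp [Sym2.eq_iff, hab, hva', hvb', Ne.symm hab, Ne.symm hva', Ne.symm hvb']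
      have hne3 : s(v, b) ≠ s(a, b) := by simp [Sym2.eq_iff, hab, hva', hvb', Ne.symm hab, Ne.symm hva', Ne.symm hvb']
      have hMG : G.toMGraph = ⟨Finset.univ, ({s(v, a), s(v, b), s(a, b)} : Multiset (Sym2 V))⟩ :=
        congrArg (fun m => MGraph.mk Finset.univ m) (by rw [hE]; exact aux_val3 _ _ _ hne1 hne2 hne3)
      show G.toMGraph.ReducesSP
      rw [hMG]
      exact aux_k3 Finset.univ v a b hva' hvb' hab (by ext x; simpa using hV x)
    · -- degree of b is 3 : contradiction via bridge
      exfalso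
      have hsub : ¬ (G.neighborSet b ⊆ {v, a}) := by
        intro hs
        have h1 := Set.ncard_le_ncard hs (Set.toFinite _)
        rw [hb3] at h1
        have h2 : ({v, a} : Set V).ncard ≤ 2 :=
          le_trans (Set.ncard_insert_le _ _) (by simp [Set.ncard_singleton])
        omega
      obtain ⟨c, hcb, hcva⟩ := Set.not_subset.mp hsub
      have hbc2 : G.Adj b c := hcb
      have hcv : c ≠ v := fun h => hcva (by rw [h]; exact Set.mem_insert _ _)
      have hca : c ≠ a := fun h => hcva (by rw [h]; exact Set.mem_insert_iff.mpr (Or.inr rfl))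
      have hnbc : G.neighborSet b = {v, a, c} := by
        refine (Set.eq_of_subset_of_ncard_le ?_ ?_ (Set.toFinite _)).symm
        · intro t ht
          rcases ht with rfl | ht
          · exact hvb.symm
          rcases ht with rfl | ht
          · exact hab'.symm
          · rw [Set.mem_singleton_iff] at ht; subst ht; exact hbc2
        · rw [hb3, Set.ncard_insert_of_notMem (by simp [hva', Ne.symm hcv]) (Set.toFinite _),
            Set.ncard_pair (Ne.symm hca)]
      have hnbw : ∀ w, G.Adj b w → w = v ∨ w = a ∨ w = c := by
        intro w hw
        have : w ∈ G.neighborSet b := hw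
        rw [hnbc] at this
        simpa using this
      refine aux_bridge_contra hbridge hbc2 ({b, v, a} : Set V) (by simp) ?_ ?_
      · simp only [Set.mem_insert_iff, Set.mem_singleton_iff]
        push_neg
        exact ⟨hbc2.ne', hcv, hca⟩
      · intro x hx y hxy
        simp only [Set.mem_insert_iff, Set.mem_singleton_iff] at hx
        rcases hx with rfl | rfl | rfl
        · rcases hnbw y hxy with rfl | rfl | rfl
          · exact Or.inr (by simp)
          · exact Or.inr (by simp)
          · exact Or.inl rfl
        · rcases hnbv y hxy with rfl | rfl
          · exact Or.inr (by simp)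
          · exact Or.inr (by simp)
        · rcases hnav y hxy with rfl | rfl
          · exact Or.inr (by simp)
          · exact Or.inr (by simp)
  · -- degree of a is 3
    have hsuba : ¬ (G.neighborSet a ⊆ {v, b}) := by
      intro hs
      have h1 := Set.ncard_le_ncard hs (Set.toFinite _)
      rw [ha3] at h1
      have h2 : ({v, b} : Set V).ncard ≤ 2 :=
        le_trans (Set.ncard_insert_le _ _) (by simp [Set.ncard_singleton])
      omega
    obtain ⟨c, hca', hcvb⟩ := Set.not_subset.mp hsuba
    have hac : G.Adj a c := hca'
    have hcv : c ≠ v := fun h => hcvb (by rw [h]; exact Set.mem_insert _ _)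
    have hcb : c ≠ b := fun h => hcvb (by rw [h]; exact Set.mem_insert_iff.mpr (Or.inr rfl))
    have hna3 : G.neighborSet a = {v, b, c} := by
      refine (Set.eq_of_subset_of_ncard_le ?_ ?_ (Set.toFinite _)).symm
      · intro t ht
        rcases ht with rfl | ht
        · exact hva.symm
        rcases ht with rfl | ht
        · exact hab'
        · rw [Set.mem_singleton_iff] at ht; subst ht; exact hac
      · rw [ha3, Set.ncard_insert_of_notMem (by simp [hvb', Ne.symm hcv]) (Set.toFinite _),
          Set.ncard_pair (Ne.symm hcb)]
    have hnaw : ∀ w, G.Adj a w → w = v ∨ w = b ∨ w = c := by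
      intro w hw
      have : w ∈ G.neighborSet a := hw
      rw [hna3] at this
      simpa using this
    obtain ⟨m, q, ham, hmc, haq, hqp⟩ := aux_exists_avoid_walk hac (hbridge s(a, c))
    obtain ⟨Q, hQa, hQv⟩ : ∃ Q : G.Walk b c, a ∉ Q.support ∧ v ∉ Q.support := by
      by_cases hvq : v ∈ q.support
      · obtain ⟨q2, hq2p, hq2a⟩ : ∃ q2 : G.Walk v c, q2.IsPath ∧ a ∉ q2.support :=
          ⟨q.dropUntil v hvq, hqp.dropUntil hvq,
            fun h => haq (q.support_dropUntil_subset hvq h)⟩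
        cases q2 with
        | nil => exact absurd rfl hcv
        | @cons _ m2 _ h2 q3 =>
          rw [SimpleGraph.Walk.cons_isPath_iff] at hq2p
          have hm2 : m2 = b := by
            rcases hnbv m2 h2 with h | h
            · exfalso
              apply hq2a
              rw [SimpleGraph.Walk.support_cons]
              exact List.mem_cons.mpr (Or.inr (h ▸ q3.start_mem_support))
            · exact h
          subst hm2
          exact ⟨q3,
            fun h => hq2a (by rw [SimpleGraph.Walk.support_cons]; exact List.mem_cons.mpr (Or.inr h)),
            hq2p.2⟩
      · have hmb : m = b := by
          rcases hnaw m ham with h | h | h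
          · subst h; exact absurd q.start_mem_support hvq
          · exact h
          · exact absurd h hmc
        subst hmb
        exact ⟨q, haq, hvq⟩
    have hbc' : G.Adj b c := by
      refine aux_chordal_adj hchordal a Q.length Q le_rfl (Ne.symm hcb) hab' hac hQa ?_
      intro w hw haw
      rcases hnaw w haw with rfl | rfl | rfl
      · exact absurd hw hQv
      · exact Or.inl rfl
      · exact Or.inr rfl
    have hnb3 : G.neighborSet b = {v, a, c} := by
      have hsub2 : ({v, a, c} : Set V) ⊆ G.neighborSet b := by
        intro t ht
        rcases ht with rfl | ht
        · exact hvb.symm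
        rcases ht with rfl | ht
        · exact hab'.symm
        · rw [Set.mem_singleton_iff] at ht; subst ht; exact hbc'
      have hcd3 : ({v, a, c} : Set V).ncard = 3 := by
        rw [Set.ncard_insert_of_notMem (by simp [hva', Ne.symm hcv]) (Set.toFinite _),
          Set.ncard_pair (Ne.symm (hac.ne'))]
      rcases hdeg b with hb2 | hb3
      · exfalso
        have h1 := Set.ncard_le_ncard hsub2 (Set.toFinite _)
        rw [hb2, hcd3] at h1
        omega
      · exact (Set.eq_of_subset_of_ncard_le hsub2 (by rw [hb3, hcd3]) (Set.toFinite _)).symm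
    have hnbw : ∀ w, G.Adj b w → w = v ∨ w = a ∨ w = c := by
      intro w hw
      have : w ∈ G.neighborSet b := hw
      rw [hnb3] at this
      simpa using this
    rcases hdeg c with hc2 | hc3
    · -- diamond case
      have hnc : G.neighborSet c = {a, b} := by
        refine (Set.eq_of_subset_of_ncard_le ?_ ?_ (Set.toFinite _)).symm
        · intro t ht
          rcases ht with rfl | ht
          · exact hac.symm
          · rw [Set.mem_singleton_iff] at ht; subst ht; exact hbc'.symm
        · rw [hc2, Set.ncard_pair hab]
      have hncw : ∀ w, G.Adj c w → w = a ∨ w = b := by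
        intro w hw
        have : w ∈ G.neighborSet c := hw
        rw [hnc] at this
        simpa using this
      have hV : ∀ x : V, x = v ∨ x = a ∨ x = b ∨ x = c := by
        intro x
        have hcl : ∀ t ∈ ({v, a, b, c} : Set V), ∀ y, G.Adj t y →
            y ∈ ({v, a, b, c} : Set V) := by
          intro t ht y hty
          simp only [Set.mem_insert_iff, Set.mem_singleton_iff] at ht ⊢
          rcases ht with rfl | rfl | rfl | rfl
          · rcases hnbv y hty with rfl | rfl <;> tauto
          · rcases hnaw y hty with rfl | rfl | rfl <;> tauto
          · rcases hnbw y hty with rfl | rfl | rfl <;> tauto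
          · rcases hncw y hty with rfl | rfl <;> tauto
        have hx := aux_closed_reach hcl (hconn.preconnected v x) (by simp)
        simpa using hx
      have hAdj : ∀ x y : V, G.Adj x y ↔
          s(x, y) ∈ ({s(a, v), s(v, b), s(a, b), s(a, c), s(b, c)} : Finset (Sym2 V)) := by
        intro x y
        constructor
        · intro h
          rcases hV x with rfl | rfl | rfl | rfl
          · rcases hnbv y h with rfl | rfl <;> simp [Sym2.eq_iff]
          · rcases hnaw y h with rfl | rfl | rfl <;> simp [Sym2.eq_iff]
          · rcases hnbw y h with rfl | rfl | rfl <;> simp [Sym2.eq_iff]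
          · rcases hncw y h with rfl | rfl <;> simp [Sym2.eq_iff]
        · intro h
          simp only [Finset.mem_insert, Finset.mem_singleton, Sym2.eq_iff] at h
          rcases h with (⟨rfl, rfl⟩ | ⟨rfl, rfl⟩) | (⟨rfl, rfl⟩ | ⟨rfl, rfl⟩) |
            (⟨rfl, rfl⟩ | ⟨rfl, rfl⟩) | (⟨rfl, rfl⟩ | ⟨rfl, rfl⟩) | (⟨rfl, rfl⟩ | ⟨rfl, rfl⟩)
          exacts [hva.symm, hva, hvb, hvb.symm, hab', hab'.symm, hac, hac.symm, hbc', hbc'.symm]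
      have hE : (Set.toFinite G.edgeSet).toFinset =
          ({s(a, v), s(v, b), s(a, b), s(a, c), s(b, c)} : Finset (Sym2 V)) := by
        ext e
        rw [Set.Finite.mem_toFinset]
        induction e using Sym2.ind with
        | _ x y =>
          rw [SimpleGraph.mem_edgeSet]
          exact hAdj x y
      have hca2 : c ≠ a := hac.ne'
      have hne1 : s(a, v) ≠ s(v, b) := by simp [Sym2.eq_iff, hab, hva', hvb', Ne.symm hab, Ne.symm hva', Ne.symm hvb', hcv, hcb, hca2, Ne.symm hcv, Ne.symm hcb, Ne.symm hca2]
      have hne2 : s(a, v) ≠ s(a, b) := by simp [Sym2.eq_iff, hab, hva', hvb', Ne.symm hab, Ne.symm hva', Ne.symm hvb', hcv, hcb, hca2, Ne.symm hcv, Ne.symm hcb, Ne.symm hca2]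
      have hne3 : s(a, v) ≠ s(a, c) := by simp [Sym2.eq_iff, hab, hva', hvb', Ne.symm hab, Ne.symm hva', Ne.symm hvb', hcv, hcb, hca2, Ne.symm hcv, Ne.symm hcb, Ne.symm hca2]
      have hne4 : s(a, v) ≠ s(b, c) := by simp [Sym2.eq_iff, hab, hva', hvb', Ne.symm hab, Ne.symm hva', Ne.symm hvb', hcv, hcb, hca2, Ne.symm hcv, Ne.symm hcb, Ne.symm hca2]
      have hne5 : s(v, b) ≠ s(a, b) := by simp [Sym2.eq_iff, hab, hva', hvb', Ne.symm hab, Ne.symm hva', Ne.symm hvb', hcv, hcb, hca2, Ne.symm hcv, Ne.symm hcb, Ne.symm hca2]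
      have hne6 : s(v, b) ≠ s(a, c) := by simp [Sym2.eq_iff, hab, hva', hvb', Ne.symm hab, Ne.symm hva', Ne.symm hvb', hcv, hcb, hca2, Ne.symm hcv, Ne.symm hcb, Ne.symm hca2]
      have hne7 : s(v, b) ≠ s(b, c) := by simp [Sym2.eq_iff, hab, hva', hvb', Ne.symm hab, Ne.symm hva', Ne.symm hvb', hcv, hcb, hca2, Ne.symm hcv, Ne.symm hcb, Ne.symm hca2]
      have hne8 : s(a, b) ≠ s(a, c) := by simp [Sym2.eq_iff, hab, hva', hvb', Ne.symm hab, Ne.symm hva', Ne.symm hvb', hcv, hcb, hca2, Ne.symm hcv, Ne.symm hcb, Ne.symm hca2]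
      have hne9 : s(a, b) ≠ s(b, c) := by simp [Sym2.eq_iff, hab, hva', hvb', Ne.symm hab, Ne.symm hva', Ne.symm hvb', hcv, hcb, hca2, Ne.symm hcv, Ne.symm hcb, Ne.symm hca2]
      have hne10 : s(a, c) ≠ s(b, c) := by simp [Sym2.eq_iff, hab, hva', hvb', Ne.symm hab, Ne.symm hva', Ne.symm hvb', hcv, hcb, hca2, Ne.symm hcv, Ne.symm hcb, Ne.symm hca2]
      have hMG : G.toMGraph = ⟨Finset.univ,
          ({s(a, v), s(v, b), s(a, b), s(a, c), s(b, c)} : Multiset (Sym2 V))⟩ :=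
        congrArg (fun m => MGraph.mk Finset.univ m)
          (by rw [hE]; exact aux_val5 _ _ _ _ _ hne1 hne2 hne3 hne4 hne5 hne6 hne7 hne8 hne9 hne10)
      show G.toMGraph.ReducesSP
      rw [hMG]
      exact aux_diamond Finset.univ v a b c hva' hvb' (Ne.symm hcv) hab (Ne.symm hca2)
        (Ne.symm hcb) (by ext x; simpa using hV x)
    · -- degree of c is 3 : contradiction via bridge
      exfalso
      have hsubc : ¬ (G.neighborSet c ⊆ {a, b}) := by
        intro hs
        have h1 := Set.ncard_le_ncard hs (Set.toFinite _)
        rw [hc3] at h1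
        have h2 : ({a, b} : Set V).ncard ≤ 2 :=
          le_trans (Set.ncard_insert_le _ _) (by simp [Set.ncard_singleton])
        omega
      obtain ⟨e, hec, heab⟩ := Set.not_subset.mp hsubc
      have hce : G.Adj c e := hec
      have hea : e ≠ a := fun h => heab (by rw [h]; exact Set.mem_insert _ _)
      have heb : e ≠ b := fun h => heab (by rw [h]; exact Set.mem_insert_iff.mpr (Or.inr rfl))
      have hev : e ≠ v := by
        rintro rfl
        rcases hnbv c hce.symm with h | h
        · exact hac.ne' h
        · exact hcb h
      have hnc3 : G.neighborSet c = {a, b, e} := by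
        refine (Set.eq_of_subset_of_ncard_le ?_ ?_ (Set.toFinite _)).symm
        · intro t ht
          rcases ht with rfl | ht
          · exact hac.symm
          rcases ht with rfl | ht
          · exact hbc'.symm
          · rw [Set.mem_singleton_iff] at ht; subst ht; exact hce
        · rw [hc3, Set.ncard_insert_of_notMem (by simp [hab, Ne.symm hea]) (Set.toFinite _),
            Set.ncard_pair (Ne.symm heb)]
      have hncw : ∀ w, G.Adj c w → w = a ∨ w = b ∨ w = e := by
        intro w hw
        have : w ∈ G.neighborSet c := hw
        rw [hnc3] at this
        simpa using this
      refine aux_bridge_contra hbridge hce ({c, a, b, v} : Set V) (by simp) ?_ ?_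
      · simp only [Set.mem_insert_iff, Set.mem_singleton_iff]
        push_neg
        exact ⟨hce.ne', hea, heb, hev⟩
      · intro x hx y hxy
        simp only [Set.mem_insert_iff, Set.mem_singleton_iff] at hx
        rcases hx with rfl | rfl | rfl | rfl
        · rcases hncw y hxy with rfl | rfl | rfl
          · exact Or.inr (by simp)
          · exact Or.inr (by simp)
          · exact Or.inl rfl
        · rcases hnaw y hxy with rfl | rfl | rfl
          · exact Or.inr (by simp)
          · exact Or.inr (by simp)
          · exact Or.inr (by simp)
        · rcases hnbw y hxy with rfl | rfl | rfl
          · exact Or.inr (by simp)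
          · exact Or.inr (by simp)
          · exact Or.inr (by simp)
        · rcases hnbv y hxy with rfl | rfl
          · exact Or.inr (by simp)
          · exact Or.inr (by simp)
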